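/- Let d ≥ 1 be an integer, let σ > 0, and let p ∈ (1, ∞) be a real exponent. Then there is a constant C, depending only on d, σ, p, such that for every g ∈ L^p(ℝ^d): ( ∫_{ℝ^d} ( ∫_{{y : |x−y| > min(|x|,|y|)/2}} |x−y|^{−d−σ} · |y|^{σ} · |g(y)| dy )^p dx )^{1/p} ≤ C · ‖g‖_{L^p(ℝ^d)}. -/

import Mathlib

open MeasureTheory Set Metric ENNReal

theorem lint_ball_le (d : ℕ) (hd : 1 ≤ d) {a : ℝ} (ha : 0 < (d:ℝ) + a) :
    ∃ c : ℝ≥0∞, c ≠ ⊤ ∧ ∀ R : ℝ, 0 < R →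
      ∫⁻ y in {y : EuclideanSpace ℝ (Fin d) | ‖y‖ ≤ R}, ENNReal.ofReal (‖y‖ ^ a) ≤
        c * ENNReal.ofReal (R ^ ((d:ℝ) + a)) := by
  haveI : Nontrivial (EuclideanSpace ℝ (Fin d)) := by
    have : 0 < Module.finrank ℝ (EuclideanSpace ℝ (Fin d)) := by
      rw [finrank_euclideanSpace_fin]; exact hd
    exact Module.nontrivial_of_finrank_pos this
  set CB : ℝ≥0∞ := volume (ball (0: EuclideanSpace ℝ (Fin d)) 1) with hCB
  have hCBtop : CB ≠ ⊤ := measure_ball_lt_top.ne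
  set ρ : ℝ≥0∞ := ENNReal.ofReal ((2:ℝ) ^ (-((d:ℝ)+a))) with hρ
  have hρ1 : ρ < 1 := by
    rw [hρ]
    exact ENNReal.ofReal_lt_one.mpr
      (Real.rpow_lt_one_of_one_lt_of_neg one_lt_two (by linarith))
  refine ⟨ENNReal.ofReal ((2:ℝ) ^ |a|) * CB * (1 - ρ)⁻¹, ?_, ?_⟩
  · refine ENNReal.mul_ne_top (ENNReal.mul_ne_top ENNReal.ofReal_ne_top hCBtop) ?_
    rw [ENNReal.inv_ne_top]
    intro h
    rw [tsub_eq_zero_iff_le] at h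
    exact absurd h (not_le.mpr hρ1)
  intro R hR
  set A : ℕ → Set (EuclideanSpace ℝ (Fin d)) :=
    fun n => {y : EuclideanSpace ℝ (Fin d) | R / 2^(n+1) < ‖y‖ ∧ ‖y‖ ≤ R / 2^n} with hA
  have hcover : {y : EuclideanSpace ℝ (Fin d) | ‖y‖ ≤ R} ⊆ {(0:EuclideanSpace ℝ (Fin d))} ∪ ⋃ n, A n := by
    intro y hy
    rcases eq_or_ne y 0 with h0 | h0
    · exact Or.inl (by simp [h0])
    right
    have hy0 : 0 < ‖y‖ := norm_pos_iff.mpr h0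
    have hex : ∃ n : ℕ, R / 2^(n+1) < ‖y‖ := by
      obtain ⟨n, hn⟩ := pow_unbounded_of_one_lt (R / ‖y‖) (one_lt_two (α := ℝ))
      have h2n : (0:ℝ) < 2^n := by positivity
      refine ⟨n, ?_⟩
      rw [div_lt_iff₀ (by positivity)]
      rw [div_lt_iff₀ hy0] at hn
      rw [pow_succ]
      nlinarith
    let n₀ := Nat.find hex
    refine mem_iUnion.mpr ⟨n₀, Nat.find_spec hex, ?_⟩
    rcases Nat.eq_zero_or_pos n₀ with h | h
    · rw [h]
      simpa using hy
    · have h2 := Nat.find_min hex (m := n₀ - 1) (by omega)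
      push_neg at h2
      have h3 : ‖y‖ ≤ R / 2 ^ (n₀ - 1 + 1) := h2
      rwa [Nat.sub_add_cancel h] at h3
  have hbound : ∀ n : ℕ, ∫⁻ y in A n, ENNReal.ofReal (‖y‖ ^ a) ≤
      (ENNReal.ofReal ((2:ℝ) ^ |a|) * ENNReal.ofReal (R ^ ((d:ℝ)+a)) * CB) * ρ ^ n := by
    intro n
    have h2n : (0:ℝ) < 2 ^ n := by positivity
    have hRn : (0:ℝ) < R / 2 ^ n := by positivity
    have hstep : ∀ y ∈ A n, ENNReal.ofReal (‖y‖ ^ a) ≤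
        ENNReal.ofReal ((2:ℝ) ^ |a| * (R / 2 ^ n) ^ a) := by
      intro y hy
      obtain ⟨h1, h2⟩ := hy
      apply ENNReal.ofReal_le_ofReal
      rcases le_or_gt 0 a with hc | hc
      · calc ‖y‖ ^ a ≤ (R / 2^n) ^ a := Real.rpow_le_rpow (norm_nonneg _) h2 hc
          _ ≤ 2 ^ |a| * (R / 2^n) ^ a := by
              nth_rewrite 1 [← one_mul ((R / 2^n) ^ a)]
              gcongr
              exact Real.one_le_rpow one_le_two (abs_nonneg a)
      · have hy0 : 0 < ‖y‖ := lt_trans (by positivity) h1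
        calc ‖y‖ ^ a ≤ (R / 2^(n+1)) ^ a :=
              Real.rpow_le_rpow_of_nonpos (by positivity) h1.le hc.le
          _ = 2 ^ |a| * (R / 2^n) ^ a := by
              have he : R / 2^(n+1) = (R / 2^n) * (2:ℝ)⁻¹ := by ring
              rw [he, Real.mul_rpow hRn.le (by norm_num), ← Real.rpow_neg_one (2:ℝ),
                ← Real.rpow_mul (by norm_num), abs_of_neg hc, neg_one_mul]
              ring
    calc ∫⁻ y in A n, ENNReal.ofReal (‖y‖ ^ a)
        ≤ ∫⁻ _ in A n, ENNReal.ofReal ((2:ℝ) ^ |a| * (R / 2 ^ n) ^ a) :=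
          setLIntegral_mono measurable_const hstep
      _ = ENNReal.ofReal ((2:ℝ) ^ |a| * (R / 2 ^ n) ^ a) * volume (A n) :=
          setLIntegral_const _ _
      _ ≤ ENNReal.ofReal ((2:ℝ) ^ |a| * (R / 2 ^ n) ^ a) *
            (ENNReal.ofReal ((R / 2^n) ^ (d:ℝ)) * CB) := by
          gcongr
          have hsub : A n ⊆ closedBall (0:EuclideanSpace ℝ (Fin d)) (R / 2^n) := fun y hy => by
            rw [mem_closedBall_zero_iff]; exact hy.2
          calc volume (A n) ≤ volume (closedBall (0:EuclideanSpace ℝ (Fin d)) (R / 2^n)) :=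
                measure_mono hsub
            _ = ENNReal.ofReal ((R / 2^n) ^ Module.finrank ℝ (EuclideanSpace ℝ (Fin d))) * CB :=
                Measure.addHaar_closedBall _ _ hRn.le
            _ = ENNReal.ofReal ((R / 2^n) ^ (d:ℝ)) * CB := by
                rw [← Real.rpow_natCast (R / 2^n)
                  (Module.finrank ℝ (EuclideanSpace ℝ (Fin d))), finrank_euclideanSpace_fin]
      _ = (ENNReal.ofReal ((2:ℝ) ^ |a|) * ENNReal.ofReal (R ^ ((d:ℝ)+a)) * CB) * ρ ^ n := by
          have key : (R / 2 ^ n) ^ a * (R / 2^n) ^ (d:ℝ) =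
              R ^ ((d:ℝ)+a) * ((2:ℝ) ^ (-((d:ℝ)+a))) ^ n := by
            rw [← Real.rpow_add hRn, Real.div_rpow hR.le h2n.le, ← Real.rpow_natCast (2:ℝ) n,
              ← Real.rpow_mul (by norm_num), ← Real.rpow_natCast ((2:ℝ) ^ (-((d:ℝ)+a))) n,
              ← Real.rpow_mul (by norm_num), div_eq_mul_inv, ← Real.rpow_neg (by norm_num)]
            ring_nf
          rw [ENNReal.ofReal_mul (by positivity : (0:ℝ) ≤ 2 ^ |a|), mul_assoc,
            ← mul_assoc (ENNReal.ofReal ((R / 2^n) ^ a)),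
            ← ENNReal.ofReal_mul (by positivity : (0:ℝ) ≤ (R / 2^n) ^ a), key,
            ENNReal.ofReal_mul (by positivity : (0:ℝ) ≤ R ^ ((d:ℝ)+a)),
            ENNReal.ofReal_pow (by positivity), ← hρ]
          ring
  calc ∫⁻ y in {y : EuclideanSpace ℝ (Fin d) | ‖y‖ ≤ R}, ENNReal.ofReal (‖y‖ ^ a)
      ≤ ∫⁻ y in ({(0:EuclideanSpace ℝ (Fin d))} ∪ ⋃ n, A n), ENNReal.ofReal (‖y‖ ^ a) :=
        lintegral_mono_set hcover
    _ ≤ (∫⁻ y in {(0:EuclideanSpace ℝ (Fin d))}, ENNReal.ofReal (‖y‖ ^ a)) +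
          ∫⁻ y in ⋃ n, A n, ENNReal.ofReal (‖y‖ ^ a) :=
        lintegral_union_le _ _ _
    _ ≤ 0 + ∑' n, ∫⁻ y in A n, ENNReal.ofReal (‖y‖ ^ a) := by
        gcongr
        · rw [setLIntegral_measure_zero]; exact measure_singleton 0
        · exact lintegral_iUnion_le _ _
    _ ≤ ∑' n, (ENNReal.ofReal ((2:ℝ) ^ |a|) * ENNReal.ofReal (R ^ ((d:ℝ)+a)) * CB) * ρ ^ n := by
        rw [zero_add]; exact ENNReal.tsum_le_tsum hbound
    _ = (ENNReal.ofReal ((2:ℝ) ^ |a|) * ENNReal.ofReal (R ^ ((d:ℝ)+a)) * CB) * (1 - ρ)⁻¹ := by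
        rw [ENNReal.tsum_mul_left, ENNReal.tsum_geometric]
    _ = ENNReal.ofReal ((2:ℝ) ^ |a|) * CB * (1 - ρ)⁻¹ * ENNReal.ofReal (R ^ ((d:ℝ)+a)) := by
        ring

theorem lint_compl_le (d : ℕ) (hd : 1 ≤ d) {b : ℝ} (hb : (d:ℝ) < b) :
    ∃ c : ℝ≥0∞, c ≠ ⊤ ∧ ∀ R : ℝ, 0 < R →
      ∫⁻ y in {y : EuclideanSpace ℝ (Fin d) | R < ‖y‖}, ENNReal.ofReal (‖y‖ ^ (-b)) ≤
        c * ENNReal.ofReal (R ^ ((d:ℝ) - b)) := by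
  set CB : ℝ≥0∞ := volume (ball (0: EuclideanSpace ℝ (Fin d)) 1) with hCB
  have hCBtop : CB ≠ ⊤ := measure_ball_lt_top.ne
  set ρ : ℝ≥0∞ := ENNReal.ofReal ((2:ℝ) ^ ((d:ℝ)-b)) with hρ
  have hρ1 : ρ < 1 := by
    rw [hρ]
    exact ENNReal.ofReal_lt_one.mpr
      (Real.rpow_lt_one_of_one_lt_of_neg one_lt_two (by linarith))
  refine ⟨ENNReal.ofReal ((2:ℝ) ^ (d:ℝ)) * CB * (1 - ρ)⁻¹, ?_, ?_⟩
  · refine ENNReal.mul_ne_top (ENNReal.mul_ne_top ENNReal.ofReal_ne_top hCBtop) ?_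
    rw [ENNReal.inv_ne_top]
    intro h
    rw [tsub_eq_zero_iff_le] at h
    exact absurd h (not_le.mpr hρ1)
  intro R hR
  set A : ℕ → Set (EuclideanSpace ℝ (Fin d)) :=
    fun n => {y : EuclideanSpace ℝ (Fin d) | R * 2^n < ‖y‖ ∧ ‖y‖ ≤ R * 2^(n+1)} with hA
  have hcover : {y : EuclideanSpace ℝ (Fin d) | R < ‖y‖} ⊆ ⋃ n, A n := by
    intro y hy
    have hy' : R < ‖y‖ := hy
    have hy0 : 0 < ‖y‖ := lt_trans hR hy'
    have hex : ∃ n : ℕ, ‖y‖ ≤ R * 2^(n+1) := by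
      obtain ⟨n, hn⟩ := pow_unbounded_of_one_lt (‖y‖ / R) (one_lt_two (α := ℝ))
      have h2n : (0:ℝ) < 2^n := by positivity
      refine ⟨n, ?_⟩
      rw [div_lt_iff₀ hR] at hn
      rw [pow_succ]
      nlinarith
    let n₀ := Nat.find hex
    refine mem_iUnion.mpr ⟨n₀, ?_, Nat.find_spec hex⟩
    rcases Nat.eq_zero_or_pos n₀ with h | h
    · rw [h]
      simpa using hy'
    · have h2 := Nat.find_min hex (m := n₀ - 1) (by omega)
      push_neg at h2
      have h3 : R * 2 ^ (n₀ - 1 + 1) < ‖y‖ := h2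
      rwa [Nat.sub_add_cancel h] at h3
  have hbound : ∀ n : ℕ, ∫⁻ y in A n, ENNReal.ofReal (‖y‖ ^ (-b)) ≤
      (ENNReal.ofReal ((2:ℝ) ^ (d:ℝ)) * ENNReal.ofReal (R ^ ((d:ℝ)-b)) * CB) * ρ ^ n := by
    intro n
    have h2n : (0:ℝ) < 2 ^ n := by positivity
    have hRn : (0:ℝ) < R * 2 ^ n := by positivity
    have hRn1 : (0:ℝ) < R * 2 ^ (n+1) := by positivity
    have hstep : ∀ y ∈ A n, ENNReal.ofReal (‖y‖ ^ (-b)) ≤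
        ENNReal.ofReal ((R * 2 ^ n) ^ (-b)) := by
      intro y hy
      exact ENNReal.ofReal_le_ofReal
        (Real.rpow_le_rpow_of_nonpos hRn hy.1.le (by linarith))
    calc ∫⁻ y in A n, ENNReal.ofReal (‖y‖ ^ (-b))
        ≤ ∫⁻ _ in A n, ENNReal.ofReal ((R * 2 ^ n) ^ (-b)) :=
          setLIntegral_mono measurable_const hstep
      _ = ENNReal.ofReal ((R * 2 ^ n) ^ (-b)) * volume (A n) :=
          setLIntegral_const _ _
      _ ≤ ENNReal.ofReal ((R * 2 ^ n) ^ (-b)) *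
            (ENNReal.ofReal ((R * 2^(n+1)) ^ (d:ℝ)) * CB) := by
          gcongr
          have hsub : A n ⊆ closedBall (0:EuclideanSpace ℝ (Fin d)) (R * 2^(n+1)) := fun y hy => by
            rw [mem_closedBall_zero_iff]; exact hy.2
          calc volume (A n) ≤ volume (closedBall (0:EuclideanSpace ℝ (Fin d)) (R * 2^(n+1))) :=
                measure_mono hsub
            _ = ENNReal.ofReal ((R * 2^(n+1)) ^ Module.finrank ℝ (EuclideanSpace ℝ (Fin d))) * CB :=
                Measure.addHaar_closedBall _ _ hRn1.le
            _ = ENNReal.ofReal ((R * 2^(n+1)) ^ (d:ℝ)) * CB := by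
                rw [← Real.rpow_natCast (R * 2^(n+1))
                  (Module.finrank ℝ (EuclideanSpace ℝ (Fin d))), finrank_euclideanSpace_fin]
      _ = (ENNReal.ofReal ((2:ℝ) ^ (d:ℝ)) * ENNReal.ofReal (R ^ ((d:ℝ)-b)) * CB) * ρ ^ n := by
          have key : (R * 2 ^ n) ^ (-b) * (R * 2^(n+1)) ^ (d:ℝ) =
              ((2:ℝ) ^ (d:ℝ) * R ^ ((d:ℝ)-b)) * ((2:ℝ) ^ ((d:ℝ)-b)) ^ n := by
            have hp : (2:ℝ)^(n+1) = 2^n * 2 := by ring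
            rw [hp, ← mul_assoc, Real.mul_rpow hRn.le (by norm_num : (0:ℝ) ≤ 2),
              Real.mul_rpow hR.le h2n.le, Real.mul_rpow hR.le h2n.le,
              ← Real.rpow_natCast (2:ℝ) n, ← Real.rpow_mul (by norm_num),
              ← Real.rpow_mul (by norm_num),
              ← Real.rpow_natCast ((2:ℝ) ^ ((d:ℝ)-b)) n, ← Real.rpow_mul (by norm_num)]
            rw [show R ^ (-b) * (2:ℝ) ^ (↑n * -b) * (R ^ (d:ℝ) * 2 ^ (↑n * (d:ℝ)) * 2 ^ (d:ℝ)) =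
              (R ^ (-b) * R ^ (d:ℝ)) * ((2:ℝ) ^ (↑n * -b) * 2 ^ (↑n * (d:ℝ))) * 2 ^ (d:ℝ) by ring,
              ← Real.rpow_add hR, ← Real.rpow_add (by norm_num : (0:ℝ) < 2)]
            ring_nf
          rw [← mul_assoc, ← ENNReal.ofReal_mul (by positivity), key,
            ENNReal.ofReal_mul (by positivity), ENNReal.ofReal_mul (by positivity),
            ENNReal.ofReal_pow (by positivity), ← hρ]
          ring
  calc ∫⁻ y in {y : EuclideanSpace ℝ (Fin d) | R < ‖y‖}, ENNReal.ofReal (‖y‖ ^ (-b))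
      ≤ ∫⁻ y in ⋃ n, A n, ENNReal.ofReal (‖y‖ ^ (-b)) := lintegral_mono_set hcover
    _ ≤ ∑' n, ∫⁻ y in A n, ENNReal.ofReal (‖y‖ ^ (-b)) := lintegral_iUnion_le _ _
    _ ≤ ∑' n, (ENNReal.ofReal ((2:ℝ) ^ (d:ℝ)) * ENNReal.ofReal (R ^ ((d:ℝ)-b)) * CB) * ρ ^ n :=
        ENNReal.tsum_le_tsum hbound
    _ = (ENNReal.ofReal ((2:ℝ) ^ (d:ℝ)) * ENNReal.ofReal (R ^ ((d:ℝ)-b)) * CB) * (1 - ρ)⁻¹ := by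
        rw [ENNReal.tsum_mul_left, ENNReal.tsum_geometric]
    _ = ENNReal.ofReal ((2:ℝ) ^ (d:ℝ)) * CB * (1 - ρ)⁻¹ * ENNReal.ofReal (R ^ ((d:ℝ) - b)) := by
        ring

noncomputable def kr (d : ℕ) (σ : ℝ) (x y : EuclideanSpace ℝ (Fin d)) : ℝ :=
  if min ‖x‖ ‖y‖ / 2 < ‖x - y‖ then ‖x - y‖ ^ (-(d:ℝ) - σ) * ‖y‖ ^ σ else 0

lemma kr_nonneg (d : ℕ) (σ : ℝ) (x y : EuclideanSpace ℝ (Fin d)) : 0 ≤ kr d σ x y := by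
  unfold kr
  split
  · positivity
  · exact le_rfl

lemma measurable_kr (d : ℕ) (σ : ℝ) :
    Measurable (fun p : EuclideanSpace ℝ (Fin d) × EuclideanSpace ℝ (Fin d) => kr d σ p.1 p.2) := by
  unfold kr
  apply Measurable.ite
  · have : IsOpen {p : EuclideanSpace ℝ (Fin d) × EuclideanSpace ℝ (Fin d) |
        min ‖p.1‖ ‖p.2‖ / 2 < ‖p.1 - p.2‖} := by
      apply isOpen_lt <;> fun_prop
    exact this.measurableSet
  · fun_prop
  · exact measurable_const

lemma measurable_kr_right (d : ℕ) (σ : ℝ) (x : EuclideanSpace ℝ (Fin d)) :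
    Measurable (fun y => kr d σ x y) :=
by
  unfold kr
  apply Measurable.ite
  · have : IsOpen {y : EuclideanSpace ℝ (Fin d) | min ‖x‖ ‖y‖ / 2 < ‖x - y‖} := by
      apply isOpen_lt <;> fun_prop
    exact this.measurableSet
  · fun_prop
  · exact measurable_const

lemma measurable_kr_left (d : ℕ) (σ : ℝ) (y : EuclideanSpace ℝ (Fin d)) :
    Measurable (fun x => kr d σ x y) :=
by
  unfold kr
  apply Measurable.ite
  · have : IsOpen {x : EuclideanSpace ℝ (Fin d) | min ‖x‖ ‖y‖ / 2 < ‖x - y‖} := by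
      apply isOpen_lt <;> fun_prop
    exact this.measurableSet
  · fun_prop
  · exact measurable_const

lemma vol_cball (d : ℕ) {R : ℝ} (hR : 0 ≤ R) :
    volume (closedBall (0 : EuclideanSpace ℝ (Fin d)) R) =
      ENNReal.ofReal (R ^ (d:ℝ)) * volume (ball (0 : EuclideanSpace ℝ (Fin d)) 1) := by
  rw [Measure.addHaar_closedBall _ _ hR, ← Real.rpow_natCast R
    (Module.finrank ℝ (EuclideanSpace ℝ (Fin d))), finrank_euclideanSpace_fin]

theorem lemB (d : ℕ) (hd : 1 ≤ d) {σ s : ℝ} (hσ : 0 < σ) (hs : 0 < s) (hsd : s < (d:ℝ) + σ) :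
    ∃ c : ℝ≥0∞, c ≠ ⊤ ∧ ∀ x : EuclideanSpace ℝ (Fin d), 0 < ‖x‖ →
      ∫⁻ y, ENNReal.ofReal (kr d σ x y * ‖y‖ ^ (-s)) ≤ c * ENNReal.ofReal (‖x‖ ^ (-s)) := by
  obtain ⟨c₁, hc₁top, hc₁⟩ := lint_ball_le d hd (a := σ - s) (by linarith)
  obtain ⟨c₂, hc₂top, hc₂⟩ := lint_compl_le d hd (b := (d:ℝ) + s) (by linarith)
  have hCBtop : volume (ball (0 : EuclideanSpace ℝ (Fin d)) 1) ≠ ⊤ := measure_ball_lt_top.ne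
  refine ⟨c₁ * ENNReal.ofReal ((2:ℝ)^s)
      + ENNReal.ofReal ((4:ℝ)^((d:ℝ)+σ) * 2^σ * 2^s * 2^(d:ℝ)) *
          volume (ball (0 : EuclideanSpace ℝ (Fin d)) 1)
      + ENNReal.ofReal ((2:ℝ)^((d:ℝ)+σ)) * c₂ * ENNReal.ofReal ((2:ℝ)^(-s)), ?_, ?_⟩
  · refine ENNReal.add_ne_top.mpr ⟨ENNReal.add_ne_top.mpr ⟨?_, ?_⟩, ?_⟩
    · exact ENNReal.mul_ne_top hc₁top ENNReal.ofReal_ne_top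
    · exact ENNReal.mul_ne_top ENNReal.ofReal_ne_top hCBtop
    · exact ENNReal.mul_ne_top (ENNReal.mul_ne_top ENNReal.ofReal_ne_top hc₂top)
        ENNReal.ofReal_ne_top
  intro x hx
  have hdpos : (0:ℝ) ≤ (d:ℝ) := Nat.cast_nonneg d
  have hX2 : (0:ℝ) < ‖x‖/2 := by linarith
  have hX4 : (0:ℝ) < ‖x‖/4 := by linarith
  have h2X : (0:ℝ) < 2*‖x‖ := by linarith
  have hexp : -(d:ℝ) - σ ≤ 0 := by linarith
  -- Piece 1
  have hP1 : ∫⁻ y in {y : EuclideanSpace ℝ (Fin d) | ‖y‖ ≤ ‖x‖/2},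
      ENNReal.ofReal (kr d σ x y * ‖y‖ ^ (-s)) ≤
      c₁ * ENNReal.ofReal ((2:ℝ)^s) * ENNReal.ofReal (‖x‖ ^ (-s)) := by
    have hpt : ∀ y ∈ {y : EuclideanSpace ℝ (Fin d) | ‖y‖ ≤ ‖x‖/2},
        ENNReal.ofReal (kr d σ x y * ‖y‖ ^ (-s)) ≤
        ENNReal.ofReal ((‖x‖/2) ^ (-(d:ℝ)-σ) * ‖y‖ ^ (σ - s)) := by
      intro y hy
      have hy' : ‖y‖ ≤ ‖x‖/2 := hy
      apply ENNReal.ofReal_le_ofReal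
      unfold kr
      split
      · rcases eq_or_lt_of_le (norm_nonneg y) with h0 | h0
        · rw [← h0] at hy' ⊢
          rw [Real.zero_rpow hσ.ne', mul_zero, zero_mul]
          positivity
        · have hxy : ‖x‖/2 ≤ ‖x - y‖ := by
            have h1 : ‖x‖ - ‖y‖ ≤ ‖x - y‖ := norm_sub_norm_le x y
            linarith
          have hb : ‖x - y‖ ^ (-(d:ℝ)-σ) ≤ (‖x‖/2) ^ (-(d:ℝ)-σ) :=
            Real.rpow_le_rpow_of_nonpos hX2 hxy hexp
          calc ‖x - y‖ ^ (-(d:ℝ)-σ) * ‖y‖ ^ σ * ‖y‖ ^ (-s)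
              = ‖x - y‖ ^ (-(d:ℝ)-σ) * ‖y‖ ^ (σ - s) := by
                rw [mul_assoc, ← Real.rpow_add h0]
                ring_nf
            _ ≤ (‖x‖/2) ^ (-(d:ℝ)-σ) * ‖y‖ ^ (σ-s) := by
                gcongr
      · rw [zero_mul]
        positivity
    calc ∫⁻ y in {y : EuclideanSpace ℝ (Fin d) | ‖y‖ ≤ ‖x‖/2},
          ENNReal.ofReal (kr d σ x y * ‖y‖ ^ (-s))
        ≤ ∫⁻ y in {y : EuclideanSpace ℝ (Fin d) | ‖y‖ ≤ ‖x‖/2},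
          ENNReal.ofReal ((‖x‖/2) ^ (-(d:ℝ)-σ) * ‖y‖ ^ (σ - s)) :=
          setLIntegral_mono (by fun_prop) hpt
      _ = ENNReal.ofReal ((‖x‖/2) ^ (-(d:ℝ)-σ)) *
          ∫⁻ y in {y : EuclideanSpace ℝ (Fin d) | ‖y‖ ≤ ‖x‖/2},
            ENNReal.ofReal (‖y‖ ^ (σ - s)) := by
          simp_rw [ENNReal.ofReal_mul (by positivity : (0:ℝ) ≤ (‖x‖/2) ^ (-(d:ℝ)-σ))]
          rw [lintegral_const_mul _ (by fun_prop)]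
      _ ≤ ENNReal.ofReal ((‖x‖/2) ^ (-(d:ℝ)-σ)) *
            (c₁ * ENNReal.ofReal ((‖x‖/2) ^ ((d:ℝ) + (σ-s)))) := by
          gcongr
          exact hc₁ (‖x‖/2) hX2
      _ = c₁ * ENNReal.ofReal ((‖x‖/2) ^ (-(d:ℝ)-σ) * (‖x‖/2) ^ ((d:ℝ)+(σ-s))) := by
          rw [ENNReal.ofReal_mul (by positivity : (0:ℝ) ≤ (‖x‖/2) ^ (-(d:ℝ)-σ))]
          ring
      _ = c₁ * ENNReal.ofReal ((2:ℝ)^s) * ENNReal.ofReal (‖x‖ ^ (-s)) := by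
          have hid : (‖x‖/2) ^ (-(d:ℝ)-σ) * (‖x‖/2) ^ ((d:ℝ)+(σ-s)) =
              (2:ℝ)^s * ‖x‖ ^ (-s) := by
            rw [← Real.rpow_add hX2, Real.rpow_def_of_pos hX2,
              Real.rpow_def_of_pos (by norm_num : (0:ℝ) < 2), Real.rpow_def_of_pos hx,
              ← Real.exp_add]
            congr 1
            rw [Real.log_div hx.ne' (by norm_num)]
            ring
          rw [hid, ENNReal.ofReal_mul (by positivity), mul_assoc]
  -- Piece 2
  have hP2 : ∫⁻ y in {y : EuclideanSpace ℝ (Fin d) | ‖x‖/2 < ‖y‖ ∧ ‖y‖ ≤ 2*‖x‖},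
      ENNReal.ofReal (kr d σ x y * ‖y‖ ^ (-s)) ≤
      ENNReal.ofReal ((4:ℝ)^((d:ℝ)+σ) * 2^σ * 2^s * 2^(d:ℝ)) *
        volume (ball (0 : EuclideanSpace ℝ (Fin d)) 1) * ENNReal.ofReal (‖x‖ ^ (-s)) := by
    have hpt : ∀ y ∈ {y : EuclideanSpace ℝ (Fin d) | ‖x‖/2 < ‖y‖ ∧ ‖y‖ ≤ 2*‖x‖},
        ENNReal.ofReal (kr d σ x y * ‖y‖ ^ (-s)) ≤
        ENNReal.ofReal ((‖x‖/4) ^ (-(d:ℝ)-σ) * ((2*‖x‖) ^ σ * (‖x‖/2) ^ (-s))) := by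
      intro y hy
      obtain ⟨hy1, hy2⟩ := hy
      apply ENNReal.ofReal_le_ofReal
      unfold kr
      split
      · rename_i hmin
        have hy0 : 0 < ‖y‖ := lt_trans hX2 hy1
        have hmin' : ‖x‖/4 ≤ ‖x - y‖ := by
          have h1 : ‖x‖/2 ≤ min ‖x‖ ‖y‖ := le_min (by linarith) hy1.le
          have h2 : min ‖x‖ ‖y‖ / 2 < ‖x - y‖ := hmin
          linarith
        have hb1 : ‖x - y‖ ^ (-(d:ℝ)-σ) ≤ (‖x‖/4) ^ (-(d:ℝ)-σ) :=
          Real.rpow_le_rpow_of_nonpos hX4 hmin' hexp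
        have hb2 : ‖y‖ ^ σ ≤ (2*‖x‖) ^ σ := Real.rpow_le_rpow (norm_nonneg y) hy2 hσ.le
        have hb3 : ‖y‖ ^ (-s) ≤ (‖x‖/2) ^ (-s) :=
          Real.rpow_le_rpow_of_nonpos hX2 hy1.le (by linarith)
        calc ‖x - y‖ ^ (-(d:ℝ)-σ) * ‖y‖ ^ σ * ‖y‖ ^ (-s)
            = ‖x - y‖ ^ (-(d:ℝ)-σ) * (‖y‖ ^ σ * ‖y‖ ^ (-s)) := by ring
          _ ≤ (‖x‖/4) ^ (-(d:ℝ)-σ) * ((2*‖x‖) ^ σ * (‖x‖/2) ^ (-s)) := by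
              gcongr <;> positivity
      · rw [zero_mul]
        positivity
    calc ∫⁻ y in {y : EuclideanSpace ℝ (Fin d) | ‖x‖/2 < ‖y‖ ∧ ‖y‖ ≤ 2*‖x‖},
          ENNReal.ofReal (kr d σ x y * ‖y‖ ^ (-s))
        ≤ ∫⁻ _ in {y : EuclideanSpace ℝ (Fin d) | ‖x‖/2 < ‖y‖ ∧ ‖y‖ ≤ 2*‖x‖},
          ENNReal.ofReal ((‖x‖/4) ^ (-(d:ℝ)-σ) * ((2*‖x‖) ^ σ * (‖x‖/2) ^ (-s))) :=
          setLIntegral_mono measurable_const hpt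
      _ = ENNReal.ofReal ((‖x‖/4) ^ (-(d:ℝ)-σ) * ((2*‖x‖) ^ σ * (‖x‖/2) ^ (-s))) *
          volume {y : EuclideanSpace ℝ (Fin d) | ‖x‖/2 < ‖y‖ ∧ ‖y‖ ≤ 2*‖x‖} :=
          setLIntegral_const _ _
      _ ≤ ENNReal.ofReal ((‖x‖/4) ^ (-(d:ℝ)-σ) * ((2*‖x‖) ^ σ * (‖x‖/2) ^ (-s))) *
          (ENNReal.ofReal ((2*‖x‖) ^ (d:ℝ)) * volume (ball (0 : EuclideanSpace ℝ (Fin d)) 1)) := by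
          gcongr
          rw [← vol_cball d h2X.le]
          apply measure_mono
          intro y hy
          rw [mem_closedBall_zero_iff]
          exact hy.2
      _ = ENNReal.ofReal ((4:ℝ)^((d:ℝ)+σ) * 2^σ * 2^s * 2^(d:ℝ)) *
            volume (ball (0 : EuclideanSpace ℝ (Fin d)) 1) * ENNReal.ofReal (‖x‖ ^ (-s)) := by
          rw [← mul_assoc, ← ENNReal.ofReal_mul (by positivity)]
          have hid : (‖x‖/4) ^ (-(d:ℝ)-σ) * ((2*‖x‖) ^ σ * (‖x‖/2) ^ (-s)) * (2*‖x‖) ^ (d:ℝ) =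
              ((4:ℝ)^((d:ℝ)+σ) * 2^σ * 2^s * 2^(d:ℝ)) * ‖x‖ ^ (-s) := by
            rw [Real.rpow_def_of_pos hX4, Real.rpow_def_of_pos h2X, Real.rpow_def_of_pos hX2,
              Real.rpow_def_of_pos h2X, Real.rpow_def_of_pos hx,
              Real.rpow_def_of_pos (by norm_num : (0:ℝ) < 4),
              Real.rpow_def_of_pos (by norm_num : (0:ℝ) < 2),
              Real.rpow_def_of_pos (by norm_num : (0:ℝ) < 2),
              Real.rpow_def_of_pos (by norm_num : (0:ℝ) < 2)]
            simp only [← Real.exp_add]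
            congr 1
            rw [Real.log_div hx.ne' (by norm_num), Real.log_div hx.ne' (by norm_num),
              Real.log_mul (by norm_num) hx.ne', show (4:ℝ) = 2^2 by norm_num, Real.log_pow]
            push_cast
            ring
          rw [hid, ENNReal.ofReal_mul (by positivity)]
          ring
  -- Piece 3
  have hP3 : ∫⁻ y in {y : EuclideanSpace ℝ (Fin d) | 2*‖x‖ < ‖y‖},
      ENNReal.ofReal (kr d σ x y * ‖y‖ ^ (-s)) ≤
      ENNReal.ofReal ((2:ℝ)^((d:ℝ)+σ)) * c₂ * ENNReal.ofReal ((2:ℝ)^(-s)) *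
        ENNReal.ofReal (‖x‖ ^ (-s)) := by
    have hpt : ∀ y ∈ {y : EuclideanSpace ℝ (Fin d) | 2*‖x‖ < ‖y‖},
        ENNReal.ofReal (kr d σ x y * ‖y‖ ^ (-s)) ≤
        ENNReal.ofReal ((2:ℝ)^((d:ℝ)+σ) * ‖y‖ ^ (-((d:ℝ) + s))) := by
      intro y hy
      have hy' : 2*‖x‖ < ‖y‖ := hy
      have hy0 : 0 < ‖y‖ := lt_trans h2X hy'
      apply ENNReal.ofReal_le_ofReal
      unfold kr
      split
      · have hxy : ‖y‖/2 ≤ ‖x - y‖ := by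
          have h1 : ‖y‖ - ‖x‖ ≤ ‖y - x‖ := norm_sub_norm_le y x
          rw [norm_sub_rev y x] at h1
          linarith
        have hb : ‖x - y‖ ^ (-(d:ℝ)-σ) ≤ (‖y‖/2) ^ (-(d:ℝ)-σ) :=
          Real.rpow_le_rpow_of_nonpos (by linarith) hxy hexp
        calc ‖x - y‖ ^ (-(d:ℝ)-σ) * ‖y‖ ^ σ * ‖y‖ ^ (-s)
            ≤ (‖y‖/2) ^ (-(d:ℝ)-σ) * ‖y‖ ^ σ * ‖y‖ ^ (-s) := by
              gcongr <;> positivity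
          _ = (2:ℝ)^((d:ℝ)+σ) * ‖y‖ ^ (-((d:ℝ) + s)) := by
              rw [Real.rpow_def_of_pos (by linarith : (0:ℝ) < ‖y‖/2),
                Real.rpow_def_of_pos hy0, Real.rpow_def_of_pos hy0,
                Real.rpow_def_of_pos (by norm_num : (0:ℝ) < 2), Real.rpow_def_of_pos hy0]
              simp only [← Real.exp_add]
              congr 1
              rw [Real.log_div hy0.ne' (by norm_num)]
              ring
      · rw [zero_mul]
        positivity
    calc ∫⁻ y in {y : EuclideanSpace ℝ (Fin d) | 2*‖x‖ < ‖y‖},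
          ENNReal.ofReal (kr d σ x y * ‖y‖ ^ (-s))
        ≤ ∫⁻ y in {y : EuclideanSpace ℝ (Fin d) | 2*‖x‖ < ‖y‖},
          ENNReal.ofReal ((2:ℝ)^((d:ℝ)+σ) * ‖y‖ ^ (-((d:ℝ) + s))) :=
          setLIntegral_mono (by fun_prop) hpt
      _ = ENNReal.ofReal ((2:ℝ)^((d:ℝ)+σ)) *
          ∫⁻ y in {y : EuclideanSpace ℝ (Fin d) | 2*‖x‖ < ‖y‖},
            ENNReal.ofReal (‖y‖ ^ (-((d:ℝ) + s))) := by
          simp_rw [ENNReal.ofReal_mul (by positivity : (0:ℝ) ≤ (2:ℝ)^((d:ℝ)+σ))]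
          rw [lintegral_const_mul _ (by fun_prop)]
      _ ≤ ENNReal.ofReal ((2:ℝ)^((d:ℝ)+σ)) *
            (c₂ * ENNReal.ofReal ((2*‖x‖) ^ ((d:ℝ) - ((d:ℝ)+s)))) := by
          gcongr
          exact hc₂ (2*‖x‖) h2X
      _ = ENNReal.ofReal ((2:ℝ)^((d:ℝ)+σ)) * c₂ * ENNReal.ofReal ((2:ℝ)^(-s)) *
            ENNReal.ofReal (‖x‖ ^ (-s)) := by
          have hid : (2*‖x‖) ^ ((d:ℝ) - ((d:ℝ)+s)) = (2:ℝ)^(-s) * ‖x‖ ^ (-s) := by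
            rw [show (d:ℝ) - ((d:ℝ)+s) = -s by ring, Real.mul_rpow (by norm_num) hx.le]
          rw [hid, ENNReal.ofReal_mul (by positivity)]
          ring
  -- Combine
  calc ∫⁻ y, ENNReal.ofReal (kr d σ x y * ‖y‖ ^ (-s))
      = ∫⁻ y in (univ : Set (EuclideanSpace ℝ (Fin d))), ENNReal.ofReal (kr d σ x y * ‖y‖ ^ (-s)) := by
        rw [setLIntegral_univ]
    _ ≤ ∫⁻ y in {y : EuclideanSpace ℝ (Fin d) | ‖y‖ ≤ ‖x‖/2} ∪
          ({y : EuclideanSpace ℝ (Fin d) | ‖x‖/2 < ‖y‖ ∧ ‖y‖ ≤ 2*‖x‖} ∪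
           {y : EuclideanSpace ℝ (Fin d) | 2*‖x‖ < ‖y‖}),
          ENNReal.ofReal (kr d σ x y * ‖y‖ ^ (-s)) := by
        apply lintegral_mono_set
        intro y _
        rcases le_or_gt ‖y‖ (‖x‖/2) with h | h
        · exact Or.inl h
        rcases le_or_gt ‖y‖ (2*‖x‖) with h' | h'
        · exact Or.inr (Or.inl ⟨h, h'⟩)
        · exact Or.inr (Or.inr h')
    _ ≤ (∫⁻ y in {y : EuclideanSpace ℝ (Fin d) | ‖y‖ ≤ ‖x‖/2},
          ENNReal.ofReal (kr d σ x y * ‖y‖ ^ (-s))) +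
        ((∫⁻ y in {y : EuclideanSpace ℝ (Fin d) | ‖x‖/2 < ‖y‖ ∧ ‖y‖ ≤ 2*‖x‖},
          ENNReal.ofReal (kr d σ x y * ‖y‖ ^ (-s))) +
         (∫⁻ y in {y : EuclideanSpace ℝ (Fin d) | 2*‖x‖ < ‖y‖},
          ENNReal.ofReal (kr d σ x y * ‖y‖ ^ (-s)))) :=
        le_trans (lintegral_union_le _ _ _) (by gcongr; exact lintegral_union_le _ _ _)
    _ ≤ c₁ * ENNReal.ofReal ((2:ℝ)^s) * ENNReal.ofReal (‖x‖ ^ (-s)) +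
        (ENNReal.ofReal ((4:ℝ)^((d:ℝ)+σ) * 2^σ * 2^s * 2^(d:ℝ)) *
            volume (ball (0 : EuclideanSpace ℝ (Fin d)) 1) * ENNReal.ofReal (‖x‖ ^ (-s)) +
         ENNReal.ofReal ((2:ℝ)^((d:ℝ)+σ)) * c₂ * ENNReal.ofReal ((2:ℝ)^(-s)) *
            ENNReal.ofReal (‖x‖ ^ (-s))) := by
        gcongr
    _ = (c₁ * ENNReal.ofReal ((2:ℝ)^s)
      + ENNReal.ofReal ((4:ℝ)^((d:ℝ)+σ) * 2^σ * 2^s * 2^(d:ℝ)) *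
          volume (ball (0 : EuclideanSpace ℝ (Fin d)) 1)
      + ENNReal.ofReal ((2:ℝ)^((d:ℝ)+σ)) * c₂ * ENNReal.ofReal ((2:ℝ)^(-s))) *
        ENNReal.ofReal (‖x‖ ^ (-s)) := by
        ring

theorem lemC (d : ℕ) (hd : 1 ≤ d) {σ r : ℝ} (hσ : 0 < σ) (hr : 0 < r) (hrd : r < (d:ℝ)) :
    ∃ c : ℝ≥0∞, c ≠ ⊤ ∧ ∀ y : EuclideanSpace ℝ (Fin d), 0 < ‖y‖ →
      ∫⁻ x, ENNReal.ofReal (kr d σ x y * ‖x‖ ^ (-r)) ≤ c * ENNReal.ofReal (‖y‖ ^ (-r)) := by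
  obtain ⟨c₁, hc₁top, hc₁⟩ := lint_ball_le d hd (a := -r) (by linarith)
  obtain ⟨c₂, hc₂top, hc₂⟩ := lint_compl_le d hd (b := (d:ℝ) + σ + r) (by linarith)
  have hCBtop : volume (ball (0 : EuclideanSpace ℝ (Fin d)) 1) ≠ ⊤ := measure_ball_lt_top.ne
  refine ⟨c₁ * ENNReal.ofReal ((2:ℝ)^(σ+r))
      + ENNReal.ofReal ((4:ℝ)^((d:ℝ)+σ) * 2^r * 2^(d:ℝ)) *
          volume (ball (0 : EuclideanSpace ℝ (Fin d)) 1)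
      + ENNReal.ofReal ((2:ℝ)^((d:ℝ)+σ)) * c₂ * ENNReal.ofReal ((2:ℝ)^(-(σ+r))), ?_, ?_⟩
  · refine ENNReal.add_ne_top.mpr ⟨ENNReal.add_ne_top.mpr ⟨?_, ?_⟩, ?_⟩
    · exact ENNReal.mul_ne_top hc₁top ENNReal.ofReal_ne_top
    · exact ENNReal.mul_ne_top ENNReal.ofReal_ne_top hCBtop
    · exact ENNReal.mul_ne_top (ENNReal.mul_ne_top ENNReal.ofReal_ne_top hc₂top)
        ENNReal.ofReal_ne_top
  intro y hy
  have hdpos : (0:ℝ) ≤ (d:ℝ) := Nat.cast_nonneg d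
  have hY2 : (0:ℝ) < ‖y‖/2 := by linarith
  have hY4 : (0:ℝ) < ‖y‖/4 := by linarith
  have h2Y : (0:ℝ) < 2*‖y‖ := by linarith
  have hexp : -(d:ℝ) - σ ≤ 0 := by linarith
  -- Piece 1
  have hP1 : ∫⁻ x in {x : EuclideanSpace ℝ (Fin d) | ‖x‖ ≤ ‖y‖/2},
      ENNReal.ofReal (kr d σ x y * ‖x‖ ^ (-r)) ≤
      c₁ * ENNReal.ofReal ((2:ℝ)^(σ+r)) * ENNReal.ofReal (‖y‖ ^ (-r)) := by
    have hpt : ∀ x ∈ {x : EuclideanSpace ℝ (Fin d) | ‖x‖ ≤ ‖y‖/2},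
        ENNReal.ofReal (kr d σ x y * ‖x‖ ^ (-r)) ≤
        ENNReal.ofReal ((‖y‖/2) ^ (-(d:ℝ)-σ) * ‖y‖ ^ σ * ‖x‖ ^ (-r)) := by
      intro x hx
      have hx' : ‖x‖ ≤ ‖y‖/2 := hx
      apply ENNReal.ofReal_le_ofReal
      unfold kr
      split
      · have hxy : ‖y‖/2 ≤ ‖x - y‖ := by
          have h1 : ‖y‖ - ‖x‖ ≤ ‖y - x‖ := norm_sub_norm_le y x
          rw [norm_sub_rev y x] at h1
          linarith
        have hb : ‖x - y‖ ^ (-(d:ℝ)-σ) ≤ (‖y‖/2) ^ (-(d:ℝ)-σ) :=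
          Real.rpow_le_rpow_of_nonpos hY2 hxy hexp
        gcongr
      · rw [zero_mul]
        positivity
    calc ∫⁻ x in {x : EuclideanSpace ℝ (Fin d) | ‖x‖ ≤ ‖y‖/2},
          ENNReal.ofReal (kr d σ x y * ‖x‖ ^ (-r))
        ≤ ∫⁻ x in {x : EuclideanSpace ℝ (Fin d) | ‖x‖ ≤ ‖y‖/2},
          ENNReal.ofReal ((‖y‖/2) ^ (-(d:ℝ)-σ) * ‖y‖ ^ σ * ‖x‖ ^ (-r)) :=
          setLIntegral_mono (by fun_prop) hpt
      _ = ENNReal.ofReal ((‖y‖/2) ^ (-(d:ℝ)-σ) * ‖y‖ ^ σ) *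
          ∫⁻ x in {x : EuclideanSpace ℝ (Fin d) | ‖x‖ ≤ ‖y‖/2},
            ENNReal.ofReal (‖x‖ ^ (-r)) := by
          simp_rw [ENNReal.ofReal_mul (by positivity : (0:ℝ) ≤ (‖y‖/2) ^ (-(d:ℝ)-σ) * ‖y‖ ^ σ)]
          rw [lintegral_const_mul _ (by fun_prop)]
      _ ≤ ENNReal.ofReal ((‖y‖/2) ^ (-(d:ℝ)-σ) * ‖y‖ ^ σ) *
            (c₁ * ENNReal.ofReal ((‖y‖/2) ^ ((d:ℝ) + -r))) := by
          gcongr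
          exact hc₁ (‖y‖/2) hY2
      _ = c₁ * ENNReal.ofReal ((‖y‖/2) ^ (-(d:ℝ)-σ) * ‖y‖ ^ σ * (‖y‖/2) ^ ((d:ℝ) + -r)) := by
          rw [ENNReal.ofReal_mul (by positivity : (0:ℝ) ≤ (‖y‖/2) ^ (-(d:ℝ)-σ) * ‖y‖ ^ σ)]
          ring
      _ = c₁ * ENNReal.ofReal ((2:ℝ)^(σ+r)) * ENNReal.ofReal (‖y‖ ^ (-r)) := by
          have hid : (‖y‖/2) ^ (-(d:ℝ)-σ) * ‖y‖ ^ σ * (‖y‖/2) ^ ((d:ℝ) + -r) =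
              (2:ℝ)^(σ+r) * ‖y‖ ^ (-r) := by
            rw [Real.rpow_def_of_pos hY2, Real.rpow_def_of_pos hY2, Real.rpow_def_of_pos hy,
              Real.rpow_def_of_pos (by norm_num : (0:ℝ) < 2), Real.rpow_def_of_pos hy]
            simp only [← Real.exp_add]
            congr 1
            rw [Real.log_div hy.ne' (by norm_num)]
            ring
          rw [hid, ENNReal.ofReal_mul (by positivity), mul_assoc]
  -- Piece 2
  have hP2 : ∫⁻ x in {x : EuclideanSpace ℝ (Fin d) | ‖y‖/2 < ‖x‖ ∧ ‖x‖ ≤ 2*‖y‖},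
      ENNReal.ofReal (kr d σ x y * ‖x‖ ^ (-r)) ≤
      ENNReal.ofReal ((4:ℝ)^((d:ℝ)+σ) * 2^r * 2^(d:ℝ)) *
        volume (ball (0 : EuclideanSpace ℝ (Fin d)) 1) * ENNReal.ofReal (‖y‖ ^ (-r)) := by
    have hpt : ∀ x ∈ {x : EuclideanSpace ℝ (Fin d) | ‖y‖/2 < ‖x‖ ∧ ‖x‖ ≤ 2*‖y‖},
        ENNReal.ofReal (kr d σ x y * ‖x‖ ^ (-r)) ≤
        ENNReal.ofReal ((‖y‖/4) ^ (-(d:ℝ)-σ) * (‖y‖ ^ σ * (‖y‖/2) ^ (-r))) := by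
      intro x hx
      obtain ⟨hx1, hx2⟩ := hx
      apply ENNReal.ofReal_le_ofReal
      unfold kr
      split
      · rename_i hmin
        have hmin' : ‖y‖/4 ≤ ‖x - y‖ := by
          have h1 : ‖y‖/2 ≤ min ‖x‖ ‖y‖ := le_min hx1.le (by linarith)
          have h2 : min ‖x‖ ‖y‖ / 2 < ‖x - y‖ := hmin
          linarith
        have hb1 : ‖x - y‖ ^ (-(d:ℝ)-σ) ≤ (‖y‖/4) ^ (-(d:ℝ)-σ) :=
          Real.rpow_le_rpow_of_nonpos hY4 hmin' hexp
        have hb3 : ‖x‖ ^ (-r) ≤ (‖y‖/2) ^ (-r) :=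
          Real.rpow_le_rpow_of_nonpos hY2 hx1.le (by linarith)
        calc ‖x - y‖ ^ (-(d:ℝ)-σ) * ‖y‖ ^ σ * ‖x‖ ^ (-r)
            = ‖x - y‖ ^ (-(d:ℝ)-σ) * (‖y‖ ^ σ * ‖x‖ ^ (-r)) := by ring
          _ ≤ (‖y‖/4) ^ (-(d:ℝ)-σ) * (‖y‖ ^ σ * (‖y‖/2) ^ (-r)) := by
              gcongr <;> positivity
      · rw [zero_mul]
        positivity
    calc ∫⁻ x in {x : EuclideanSpace ℝ (Fin d) | ‖y‖/2 < ‖x‖ ∧ ‖x‖ ≤ 2*‖y‖},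
          ENNReal.ofReal (kr d σ x y * ‖x‖ ^ (-r))
        ≤ ∫⁻ _ in {x : EuclideanSpace ℝ (Fin d) | ‖y‖/2 < ‖x‖ ∧ ‖x‖ ≤ 2*‖y‖},
          ENNReal.ofReal ((‖y‖/4) ^ (-(d:ℝ)-σ) * (‖y‖ ^ σ * (‖y‖/2) ^ (-r))) :=
          setLIntegral_mono measurable_const hpt
      _ = ENNReal.ofReal ((‖y‖/4) ^ (-(d:ℝ)-σ) * (‖y‖ ^ σ * (‖y‖/2) ^ (-r))) *
          volume {x : EuclideanSpace ℝ (Fin d) | ‖y‖/2 < ‖x‖ ∧ ‖x‖ ≤ 2*‖y‖} :=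
          setLIntegral_const _ _
      _ ≤ ENNReal.ofReal ((‖y‖/4) ^ (-(d:ℝ)-σ) * (‖y‖ ^ σ * (‖y‖/2) ^ (-r))) *
          (ENNReal.ofReal ((2*‖y‖) ^ (d:ℝ)) * volume (ball (0 : EuclideanSpace ℝ (Fin d)) 1)) := by
          gcongr
          rw [← vol_cball d h2Y.le]
          apply measure_mono
          intro x hx
          rw [mem_closedBall_zero_iff]
          exact hx.2
      _ = ENNReal.ofReal ((4:ℝ)^((d:ℝ)+σ) * 2^r * 2^(d:ℝ)) *
            volume (ball (0 : EuclideanSpace ℝ (Fin d)) 1) * ENNReal.ofReal (‖y‖ ^ (-r)) := by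
          rw [← mul_assoc, ← ENNReal.ofReal_mul (by positivity)]
          have hid : (‖y‖/4) ^ (-(d:ℝ)-σ) * (‖y‖ ^ σ * (‖y‖/2) ^ (-r)) * (2*‖y‖) ^ (d:ℝ) =
              ((4:ℝ)^((d:ℝ)+σ) * 2^r * 2^(d:ℝ)) * ‖y‖ ^ (-r) := by
            rw [Real.rpow_def_of_pos hY4, Real.rpow_def_of_pos hy, Real.rpow_def_of_pos hY2,
              Real.rpow_def_of_pos h2Y, Real.rpow_def_of_pos hy,
              Real.rpow_def_of_pos (by norm_num : (0:ℝ) < 4),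
              Real.rpow_def_of_pos (by norm_num : (0:ℝ) < 2),
              Real.rpow_def_of_pos (by norm_num : (0:ℝ) < 2)]
            simp only [← Real.exp_add]
            congr 1
            rw [Real.log_div hy.ne' (by norm_num), Real.log_div hy.ne' (by norm_num),
              Real.log_mul (by norm_num) hy.ne', show (4:ℝ) = 2^2 by norm_num, Real.log_pow]
            push_cast
            ring
          rw [hid, ENNReal.ofReal_mul (by positivity)]
          ring
  -- Piece 3
  have hP3 : ∫⁻ x in {x : EuclideanSpace ℝ (Fin d) | 2*‖y‖ < ‖x‖},
      ENNReal.ofReal (kr d σ x y * ‖x‖ ^ (-r)) ≤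
      ENNReal.ofReal ((2:ℝ)^((d:ℝ)+σ)) * c₂ * ENNReal.ofReal ((2:ℝ)^(-(σ+r))) *
        ENNReal.ofReal (‖y‖ ^ (-r)) := by
    have hpt : ∀ x ∈ {x : EuclideanSpace ℝ (Fin d) | 2*‖y‖ < ‖x‖},
        ENNReal.ofReal (kr d σ x y * ‖x‖ ^ (-r)) ≤
        ENNReal.ofReal ((2:ℝ)^((d:ℝ)+σ) * ‖y‖ ^ σ * ‖x‖ ^ (-((d:ℝ) + σ + r))) := by
      intro x hx
      have hx' : 2*‖y‖ < ‖x‖ := hx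
      have hx0 : 0 < ‖x‖ := lt_trans h2Y hx'
      apply ENNReal.ofReal_le_ofReal
      unfold kr
      split
      · have hxy : ‖x‖/2 ≤ ‖x - y‖ := by
          have h1 : ‖x‖ - ‖y‖ ≤ ‖x - y‖ := norm_sub_norm_le x y
          linarith
        have hb : ‖x - y‖ ^ (-(d:ℝ)-σ) ≤ (‖x‖/2) ^ (-(d:ℝ)-σ) :=
          Real.rpow_le_rpow_of_nonpos (by linarith) hxy hexp
        calc ‖x - y‖ ^ (-(d:ℝ)-σ) * ‖y‖ ^ σ * ‖x‖ ^ (-r)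
            ≤ (‖x‖/2) ^ (-(d:ℝ)-σ) * ‖y‖ ^ σ * ‖x‖ ^ (-r) := by
              gcongr <;> positivity
          _ = (2:ℝ)^((d:ℝ)+σ) * ‖y‖ ^ σ * ‖x‖ ^ (-((d:ℝ) + σ + r)) := by
              simp only [Real.rpow_def_of_pos (show (0:ℝ) < ‖x‖/2 by linarith),
                Real.rpow_def_of_pos hy, Real.rpow_def_of_pos hx0,
                Real.rpow_def_of_pos (show (0:ℝ) < 2 by norm_num), ← Real.exp_add]
              congr 1
              rw [Real.log_div hx0.ne' (by norm_num)]
              ring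
      · rw [zero_mul]
        positivity
    calc ∫⁻ x in {x : EuclideanSpace ℝ (Fin d) | 2*‖y‖ < ‖x‖},
          ENNReal.ofReal (kr d σ x y * ‖x‖ ^ (-r))
        ≤ ∫⁻ x in {x : EuclideanSpace ℝ (Fin d) | 2*‖y‖ < ‖x‖},
          ENNReal.ofReal ((2:ℝ)^((d:ℝ)+σ) * ‖y‖ ^ σ * ‖x‖ ^ (-((d:ℝ) + σ + r))) :=
          setLIntegral_mono (by fun_prop) hpt
      _ = ENNReal.ofReal ((2:ℝ)^((d:ℝ)+σ) * ‖y‖ ^ σ) *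
          ∫⁻ x in {x : EuclideanSpace ℝ (Fin d) | 2*‖y‖ < ‖x‖},
            ENNReal.ofReal (‖x‖ ^ (-((d:ℝ) + σ + r))) := by
          simp_rw [ENNReal.ofReal_mul (by positivity : (0:ℝ) ≤ (2:ℝ)^((d:ℝ)+σ) * ‖y‖ ^ σ)]
          rw [lintegral_const_mul _ (by fun_prop)]
      _ ≤ ENNReal.ofReal ((2:ℝ)^((d:ℝ)+σ) * ‖y‖ ^ σ) *
            (c₂ * ENNReal.ofReal ((2*‖y‖) ^ ((d:ℝ) - ((d:ℝ) + σ + r)))) := by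
          gcongr
          exact hc₂ (2*‖y‖) h2Y
      _ = ENNReal.ofReal ((2:ℝ)^((d:ℝ)+σ)) * c₂ * ENNReal.ofReal ((2:ℝ)^(-(σ+r))) *
            ENNReal.ofReal (‖y‖ ^ (-r)) := by
          have hid : (2:ℝ)^((d:ℝ)+σ) * ‖y‖ ^ σ * (2*‖y‖) ^ ((d:ℝ) - ((d:ℝ) + σ + r)) =
              (2:ℝ)^((d:ℝ)+σ) * ((2:ℝ)^(-(σ+r)) * ‖y‖ ^ (-r)) := by
            simp only [Real.rpow_def_of_pos (show (0:ℝ) < 2 by norm_num),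
              Real.rpow_def_of_pos hy, Real.rpow_def_of_pos h2Y, ← Real.exp_add]
            congr 1
            rw [Real.log_mul (by norm_num) hy.ne']
            ring
          rw [← mul_assoc, mul_right_comm (ENNReal.ofReal ((2:ℝ)^((d:ℝ)+σ) * ‖y‖ ^ σ)) c₂,
            ← ENNReal.ofReal_mul (by positivity), hid,
            ENNReal.ofReal_mul (by positivity), ENNReal.ofReal_mul (by positivity)]
          ring
  -- Combine
  calc ∫⁻ x, ENNReal.ofReal (kr d σ x y * ‖x‖ ^ (-r))
      = ∫⁻ x in (univ : Set (EuclideanSpace ℝ (Fin d))), ENNReal.ofReal (kr d σ x y * ‖x‖ ^ (-r)) := by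
        rw [setLIntegral_univ]
    _ ≤ ∫⁻ x in {x : EuclideanSpace ℝ (Fin d) | ‖x‖ ≤ ‖y‖/2} ∪
          ({x : EuclideanSpace ℝ (Fin d) | ‖y‖/2 < ‖x‖ ∧ ‖x‖ ≤ 2*‖y‖} ∪
           {x : EuclideanSpace ℝ (Fin d) | 2*‖y‖ < ‖x‖}),
          ENNReal.ofReal (kr d σ x y * ‖x‖ ^ (-r)) := by
        apply lintegral_mono_set
        intro x _
        rcases le_or_gt ‖x‖ (‖y‖/2) with h | h
        · exact Or.inl h
        rcases le_or_gt ‖x‖ (2*‖y‖) with h' | h'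
        · exact Or.inr (Or.inl ⟨h, h'⟩)
        · exact Or.inr (Or.inr h')
    _ ≤ (∫⁻ x in {x : EuclideanSpace ℝ (Fin d) | ‖x‖ ≤ ‖y‖/2},
          ENNReal.ofReal (kr d σ x y * ‖x‖ ^ (-r))) +
        ((∫⁻ x in {x : EuclideanSpace ℝ (Fin d) | ‖y‖/2 < ‖x‖ ∧ ‖x‖ ≤ 2*‖y‖},
          ENNReal.ofReal (kr d σ x y * ‖x‖ ^ (-r))) +
         (∫⁻ x in {x : EuclideanSpace ℝ (Fin d) | 2*‖y‖ < ‖x‖},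
          ENNReal.ofReal (kr d σ x y * ‖x‖ ^ (-r)))) :=
        le_trans (lintegral_union_le _ _ _) (by gcongr; exact lintegral_union_le _ _ _)
    _ ≤ c₁ * ENNReal.ofReal ((2:ℝ)^(σ+r)) * ENNReal.ofReal (‖y‖ ^ (-r)) +
        (ENNReal.ofReal ((4:ℝ)^((d:ℝ)+σ) * 2^r * 2^(d:ℝ)) *
            volume (ball (0 : EuclideanSpace ℝ (Fin d)) 1) * ENNReal.ofReal (‖y‖ ^ (-r)) +
         ENNReal.ofReal ((2:ℝ)^((d:ℝ)+σ)) * c₂ * ENNReal.ofReal ((2:ℝ)^(-(σ+r))) *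
            ENNReal.ofReal (‖y‖ ^ (-r))) := by
        gcongr
    _ = (c₁ * ENNReal.ofReal ((2:ℝ)^(σ+r))
      + ENNReal.ofReal ((4:ℝ)^((d:ℝ)+σ) * 2^r * 2^(d:ℝ)) *
          volume (ball (0 : EuclideanSpace ℝ (Fin d)) 1)
      + ENNReal.ofReal ((2:ℝ)^((d:ℝ)+σ)) * c₂ * ENNReal.ofReal ((2:ℝ)^(-(σ+r)))) *
        ENNReal.ofReal (‖y‖ ^ (-r)) := by
        ring

/-- Schur-test bound used in the proof of the reversed Hardy inequality: the operator with
kernel `1_{|x−y| > min(|x|,|y|)/2} |x−y|^{−d−σ} |y|^{σ}` is bounded on `L^p(ℝ^d)` for every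
`σ > 0` and `p ∈ (1,∞)`. -/
theorem off_diagonal_kernel_bounded
    (d : ℕ) (hd : 1 ≤ d) (σ p : ℝ) (hσ : 0 < σ) (hp : 1 < p) :
    ∃ C : ℝ, 0 < C ∧
      ∀ g : EuclideanSpace ℝ (Fin d) → ℝ, MemLp g (ENNReal.ofReal p) volume →
        (∫⁻ x, (∫⁻ y in {y : EuclideanSpace ℝ (Fin d) | min ‖x‖ ‖y‖ / 2 < ‖x - y‖},
            ENNReal.ofReal (‖x - y‖ ^ (-(d : ℝ) - σ) * ‖y‖ ^ σ * |g y|)) ^ p) ^ (1 / p)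
          ≤ ENNReal.ofReal C * eLpNorm g (ENNReal.ofReal p) volume := by
  have hp0 : 0 < p := lt_trans one_pos hp
  have hpq : p.HolderConjugate p.conjExponent := Real.HolderConjugate.conjExponent hp
  set q := p.conjExponent with hqdef
  have hq1 : 1 < q := hpq.symm.lt
  have hq0 : 0 < q := lt_trans one_pos hq1
  have hd1 : (1:ℝ) ≤ (d:ℝ) := by exact_mod_cast hd
  have hdR : (0:ℝ) < (d:ℝ) := by linarith
  haveI : Nontrivial (EuclideanSpace ℝ (Fin d)) := by
    have h0 : 0 < Module.finrank ℝ (EuclideanSpace ℝ (Fin d)) := by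
      rw [finrank_euclideanSpace_fin]; exact hd
    exact Module.nontrivial_of_finrank_pos h0
  have hae : ∀ᵐ z : EuclideanSpace ℝ (Fin d), z ≠ 0 := by
    rw [ae_iff]
    simp only [ne_eq, not_not, Set.setOf_eq_eq_singleton]
    exact measure_singleton 0
  set t := min ((d:ℝ)/(2*p)) (((d:ℝ)+σ)/(2*q)) with htdef
  have ht0 : 0 < t := lt_min (by positivity) (by positivity)
  have hr0 : 0 < t*p := by positivity
  have hrd : t*p < (d:ℝ) := by
    have h1 : t*p ≤ ((d:ℝ)/(2*p))*p := by
      gcongr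
      exact min_le_left _ _
    have h2 : ((d:ℝ)/(2*p))*p = (d:ℝ)/2 := by field_simp
    rw [h2] at h1
    linarith
  have hs0 : 0 < t*q := by positivity
  have hsd : t*q < (d:ℝ) + σ := by
    have h1 : t*q ≤ (((d:ℝ)+σ)/(2*q))*q := by
      gcongr
      exact min_le_right _ _
    have h2 : (((d:ℝ)+σ)/(2*q))*q = ((d:ℝ)+σ)/2 := by field_simp
    rw [h2] at h1
    linarith
  obtain ⟨cB, hcBtop, hcB⟩ := lemB d hd hσ hs0 hsd
  obtain ⟨cC, hcCtop, hcC⟩ := lemC d hd hσ hr0 hrd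
  have hCfintop : (cB ^ (p/q) * cC) ^ (1/p) ≠ ⊤ := by
    apply ENNReal.rpow_ne_top_of_nonneg (by positivity)
    exact ENNReal.mul_ne_top (ENNReal.rpow_ne_top_of_nonneg (by positivity) hcBtop) hcCtop
  refine ⟨((cB ^ (p/q) * cC) ^ (1/p)).toReal + 1, by positivity, ?_⟩
  intro g hg
  have hGae : AEMeasurable (fun y => ((‖g y‖₊ : ℝ≥0∞))) volume := hg.1.aemeasurable.enorm
  set G₀ := hGae.mk _ with hG₀def
  have hG₀meas : Measurable G₀ := hGae.measurable_mk
  have hGG₀ : (fun y => ((‖g y‖₊ : ℝ≥0∞))) =ᵐ[volume] G₀ := hGae.ae_eq_mk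
  -- rewrite the inner integral
  have hinner : ∀ x : EuclideanSpace ℝ (Fin d),
      (∫⁻ y in {y : EuclideanSpace ℝ (Fin d) | min ‖x‖ ‖y‖ / 2 < ‖x - y‖},
        ENNReal.ofReal (‖x - y‖ ^ (-(d : ℝ) - σ) * ‖y‖ ^ σ * |g y|))
      = ∫⁻ y, ENNReal.ofReal (kr d σ x y) * G₀ y := by
    intro x
    have hSmeas : MeasurableSet {y : EuclideanSpace ℝ (Fin d) | min ‖x‖ ‖y‖ / 2 < ‖x - y‖} := by
      have hopen : IsOpen {y : EuclideanSpace ℝ (Fin d) | min ‖x‖ ‖y‖ / 2 < ‖x - y‖} := by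
        apply isOpen_lt <;> fun_prop
      exact hopen.measurableSet
    rw [← lintegral_indicator hSmeas]
    have step1 : ∀ y : EuclideanSpace ℝ (Fin d),
        ({y : EuclideanSpace ℝ (Fin d) | min ‖x‖ ‖y‖ / 2 < ‖x - y‖}.indicator
          (fun y => ENNReal.ofReal (‖x - y‖ ^ (-(d : ℝ) - σ) * ‖y‖ ^ σ * |g y|))) y
        = ENNReal.ofReal (kr d σ x y) * ((‖g y‖₊ : ℝ≥0∞)) := by
      intro y
      rw [Set.indicator_apply, ← enorm_eq_nnnorm, Real.enorm_eq_ofReal_abs]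
      unfold kr
      simp only [Set.mem_setOf_eq]
      split_ifs with h
      · rw [← ENNReal.ofReal_mul (by positivity)]
      · simp
    simp_rw [step1]
    exact lintegral_congr_ae (by filter_upwards [hGG₀] with y hy; rw [hy])
  have hLHS : ∫⁻ x, (∫⁻ y in {y : EuclideanSpace ℝ (Fin d) | min ‖x‖ ‖y‖ / 2 < ‖x - y‖},
        ENNReal.ofReal (‖x - y‖ ^ (-(d : ℝ) - σ) * ‖y‖ ^ σ * |g y|)) ^ p
      = ∫⁻ x, (∫⁻ y, ENNReal.ofReal (kr d σ x y) * G₀ y) ^ p :=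
    lintegral_congr fun x => by rw [hinner x]
  rw [hLHS]
  -- Hölder step
  have hHolder : ∀ x : EuclideanSpace ℝ (Fin d), 0 < ‖x‖ →
      (∫⁻ y, ENNReal.ofReal (kr d σ x y) * G₀ y) ^ p ≤
      cB ^ (p/q) * (ENNReal.ofReal (‖x‖ ^ (-(t*p))) *
        ∫⁻ y, ENNReal.ofReal (kr d σ x y) * G₀ y ^ p * ENNReal.ofReal (‖y‖ ^ (t*p))) := by
    intro x hx
    have hfh : (fun y => ENNReal.ofReal (kr d σ x y) * G₀ y) =ᵐ[volume]
        (fun y => ((ENNReal.ofReal (kr d σ x y) * G₀ y ^ p * ENNReal.ofReal (‖y‖ ^ (t*p))) ^ (1/p))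
          * ((ENNReal.ofReal (kr d σ x y) * ENNReal.ofReal (‖y‖ ^ (-(t*q)))) ^ (1/q))) := by
      filter_upwards [hae] with y hy0
      have hy0' : 0 < ‖y‖ := norm_pos_iff.mpr hy0
      have hK : ENNReal.ofReal (kr d σ x y) ^ (1/p) * ENNReal.ofReal (kr d σ x y) ^ (1/q)
          = ENNReal.ofReal (kr d σ x y) := by
        rw [← ENNReal.rpow_add_of_nonneg _ _ (by positivity) (by positivity)]
        rw [one_div, one_div, hpq.inv_add_inv_eq_one, ENNReal.rpow_one]
      have hVp : ENNReal.ofReal (‖y‖ ^ (t*p)) ^ (1/p) = ENNReal.ofReal (‖y‖ ^ t) := by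
        rw [ENNReal.ofReal_rpow_of_nonneg (by positivity) (by positivity),
          ← Real.rpow_mul (norm_nonneg y), show t*p*(1/p) = t by field_simp]
      have hWq : ENNReal.ofReal (‖y‖ ^ (-(t*q))) ^ (1/q) = ENNReal.ofReal (‖y‖ ^ (-t)) := by
        rw [ENNReal.ofReal_rpow_of_nonneg (by positivity) (by positivity),
          ← Real.rpow_mul (norm_nonneg y), show -(t*q)*(1/q) = -t by field_simp]
      have hW : ENNReal.ofReal (‖y‖ ^ t) * ENNReal.ofReal (‖y‖ ^ (-t)) = 1 := by
        rw [← ENNReal.ofReal_mul (by positivity), ← Real.rpow_add hy0', add_neg_cancel,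
          Real.rpow_zero, ENNReal.ofReal_one]
      symm
      calc ((ENNReal.ofReal (kr d σ x y) * G₀ y ^ p * ENNReal.ofReal (‖y‖ ^ (t*p))) ^ (1/p))
            * ((ENNReal.ofReal (kr d σ x y) * ENNReal.ofReal (‖y‖ ^ (-(t*q)))) ^ (1/q))
          = (ENNReal.ofReal (kr d σ x y) ^ (1/p) * (G₀ y ^ p) ^ (1/p) *
              ENNReal.ofReal (‖y‖ ^ (t*p)) ^ (1/p)) *
            (ENNReal.ofReal (kr d σ x y) ^ (1/q) * ENNReal.ofReal (‖y‖ ^ (-(t*q))) ^ (1/q)) := by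
            rw [ENNReal.mul_rpow_of_nonneg _ _ (by positivity : (0:ℝ) ≤ 1/p),
              ENNReal.mul_rpow_of_nonneg _ _ (by positivity : (0:ℝ) ≤ 1/p),
              ENNReal.mul_rpow_of_nonneg _ _ (by positivity : (0:ℝ) ≤ 1/q)]
        _ = (ENNReal.ofReal (kr d σ x y) ^ (1/p) * ENNReal.ofReal (kr d σ x y) ^ (1/q)) *
              G₀ y *
              (ENNReal.ofReal (‖y‖ ^ (t*p)) ^ (1/p) * ENNReal.ofReal (‖y‖ ^ (-(t*q))) ^ (1/q)) := by
            rw [← ENNReal.rpow_mul, mul_one_div_cancel hp0.ne', ENNReal.rpow_one]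
            ring
        _ = ENNReal.ofReal (kr d σ x y) * G₀ y *
              (ENNReal.ofReal (‖y‖ ^ t) * ENNReal.ofReal (‖y‖ ^ (-t))) := by
            rw [hK, hVp, hWq]
        _ = ENNReal.ofReal (kr d σ x y) * G₀ y := by rw [hW, mul_one]
    have hf_meas : AEMeasurable (fun y =>
        ((ENNReal.ofReal (kr d σ x y) * G₀ y ^ p * ENNReal.ofReal (‖y‖ ^ (t*p))) ^ (1/p)))
        volume := by
      have h1 := measurable_kr_right d σ x
      have h2 := hG₀meas
      fun_prop
    have hh_meas : AEMeasurable (fun y =>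
        ((ENNReal.ofReal (kr d σ x y) * ENNReal.ofReal (‖y‖ ^ (-(t*q)))) ^ (1/q))) volume := by
      have h1 := measurable_kr_right d σ x
      fun_prop
    have hHo := ENNReal.lintegral_mul_le_Lp_mul_Lq volume hpq hf_meas hh_meas
    have hfp : (∫⁻ y, ((ENNReal.ofReal (kr d σ x y) * G₀ y ^ p *
        ENNReal.ofReal (‖y‖ ^ (t*p))) ^ (1/p)) ^ p)
        = ∫⁻ y, ENNReal.ofReal (kr d σ x y) * G₀ y ^ p * ENNReal.ofReal (‖y‖ ^ (t*p)) :=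
      lintegral_congr fun y => by
        rw [← ENNReal.rpow_mul, one_div, inv_mul_cancel₀ hp0.ne', ENNReal.rpow_one]
    have hhq : (∫⁻ y, ((ENNReal.ofReal (kr d σ x y) *
        ENNReal.ofReal (‖y‖ ^ (-(t*q)))) ^ (1/q)) ^ q)
        = ∫⁻ y, ENNReal.ofReal (kr d σ x y * ‖y‖ ^ (-(t*q))) :=
      lintegral_congr fun y => by
        rw [← ENNReal.rpow_mul, one_div, inv_mul_cancel₀ hq0.ne', ENNReal.rpow_one,
          ← ENNReal.ofReal_mul (kr_nonneg _ _ _ _)]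
    calc (∫⁻ y, ENNReal.ofReal (kr d σ x y) * G₀ y) ^ p
        = (∫⁻ y, (fun y => ((ENNReal.ofReal (kr d σ x y) * G₀ y ^ p *
            ENNReal.ofReal (‖y‖ ^ (t*p))) ^ (1/p))
            * ((ENNReal.ofReal (kr d σ x y) * ENNReal.ofReal (‖y‖ ^ (-(t*q)))) ^ (1/q))) y) ^ p := by
          rw [lintegral_congr_ae hfh]
      _ ≤ ((∫⁻ y, ((ENNReal.ofReal (kr d σ x y) * G₀ y ^ p *
            ENNReal.ofReal (‖y‖ ^ (t*p))) ^ (1/p)) ^ p) ^ (1/p) *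
          (∫⁻ y, ((ENNReal.ofReal (kr d σ x y) *
            ENNReal.ofReal (‖y‖ ^ (-(t*q)))) ^ (1/q)) ^ q) ^ (1/q)) ^ p := by
          apply ENNReal.rpow_le_rpow _ hp0.le
          exact hHo
      _ = (∫⁻ y, ENNReal.ofReal (kr d σ x y) * G₀ y ^ p * ENNReal.ofReal (‖y‖ ^ (t*p))) ^ ((1/p)*p) *
          ((∫⁻ y, ENNReal.ofReal (kr d σ x y * ‖y‖ ^ (-(t*q)))) ^ (1/q)) ^ p := by
          rw [hfp, hhq, ENNReal.mul_rpow_of_nonneg _ _ hp0.le, ← ENNReal.rpow_mul]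
      _ = (∫⁻ y, ENNReal.ofReal (kr d σ x y) * G₀ y ^ p * ENNReal.ofReal (‖y‖ ^ (t*p))) *
          (∫⁻ y, ENNReal.ofReal (kr d σ x y * ‖y‖ ^ (-(t*q)))) ^ (p/q) := by
          rw [one_div, inv_mul_cancel₀ hp0.ne', ENNReal.rpow_one, ← ENNReal.rpow_mul,
            show (1/q)*p = p/q by ring]
      _ ≤ (∫⁻ y, ENNReal.ofReal (kr d σ x y) * G₀ y ^ p * ENNReal.ofReal (‖y‖ ^ (t*p))) *
          (cB * ENNReal.ofReal (‖x‖ ^ (-(t*q)))) ^ (p/q) := by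
          gcongr
          exact hcB x hx
      _ = cB ^ (p/q) * (ENNReal.ofReal (‖x‖ ^ (-(t*p))) *
          ∫⁻ y, ENNReal.ofReal (kr d σ x y) * G₀ y ^ p * ENNReal.ofReal (‖y‖ ^ (t*p))) := by
          rw [ENNReal.mul_rpow_of_nonneg _ _ (by positivity : (0:ℝ) ≤ p/q),
            ENNReal.ofReal_rpow_of_nonneg (by positivity) (by positivity : (0:ℝ) ≤ p/q),
            ← Real.rpow_mul (norm_nonneg x),
            show -(t*q)*(p/q) = -(t*p) by field_simp]
          ring
  -- Tonelli and second kernel bound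
  have hH : Measurable (fun z : EuclideanSpace ℝ (Fin d) × EuclideanSpace ℝ (Fin d) =>
      ENNReal.ofReal (‖z.1‖ ^ (-(t*p))) *
        (ENNReal.ofReal (kr d σ z.1 z.2) * G₀ z.2 ^ p * ENNReal.ofReal (‖z.2‖ ^ (t*p)))) := by
    have h1 := measurable_kr d σ
    have h2 := hG₀meas
    fun_prop
  have hIeq : ∀ x : EuclideanSpace ℝ (Fin d),
      ENNReal.ofReal (‖x‖ ^ (-(t*p))) *
        (∫⁻ y, ENNReal.ofReal (kr d σ x y) * G₀ y ^ p * ENNReal.ofReal (‖y‖ ^ (t*p)))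
      = ∫⁻ y, ENNReal.ofReal (‖x‖ ^ (-(t*p))) *
          (ENNReal.ofReal (kr d σ x y) * G₀ y ^ p * ENNReal.ofReal (‖y‖ ^ (t*p))) := by
    intro x
    rw [← lintegral_const_mul]
    have h1 := measurable_kr_right d σ x
    have h2 := hG₀meas
    fun_prop
  have hswap : ∫⁻ x, ∫⁻ y, ENNReal.ofReal (‖x‖ ^ (-(t*p))) *
        (ENNReal.ofReal (kr d σ x y) * G₀ y ^ p * ENNReal.ofReal (‖y‖ ^ (t*p)))
      = ∫⁻ y, ∫⁻ x, ENNReal.ofReal (‖x‖ ^ (-(t*p))) *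
        (ENNReal.ofReal (kr d σ x y) * G₀ y ^ p * ENNReal.ofReal (‖y‖ ^ (t*p))) := by
    apply lintegral_lintegral_swap
    exact hH.aemeasurable
  have hinnerx : ∀ y : EuclideanSpace ℝ (Fin d), 0 < ‖y‖ →
      (∫⁻ x, ENNReal.ofReal (‖x‖ ^ (-(t*p))) *
        (ENNReal.ofReal (kr d σ x y) * G₀ y ^ p * ENNReal.ofReal (‖y‖ ^ (t*p))))
      ≤ cC * G₀ y ^ p := by
    intro y hy
    have hrw : (fun x => ENNReal.ofReal (‖x‖ ^ (-(t*p))) *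
        (ENNReal.ofReal (kr d σ x y) * G₀ y ^ p * ENNReal.ofReal (‖y‖ ^ (t*p))))
        = fun x => (G₀ y ^ p * ENNReal.ofReal (‖y‖ ^ (t*p))) *
          (ENNReal.ofReal (kr d σ x y * ‖x‖ ^ (-(t*p)))) := by
      funext x
      rw [ENNReal.ofReal_mul (kr_nonneg _ _ _ _)]
      ring
    rw [hrw, lintegral_const_mul]
    · calc (G₀ y ^ p * ENNReal.ofReal (‖y‖ ^ (t*p))) *
            ∫⁻ x, ENNReal.ofReal (kr d σ x y * ‖x‖ ^ (-(t*p)))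
          ≤ (G₀ y ^ p * ENNReal.ofReal (‖y‖ ^ (t*p))) * (cC * ENNReal.ofReal (‖y‖ ^ (-(t*p)))) := by
            gcongr
            exact hcC y hy
        _ = cC * G₀ y ^ p * (ENNReal.ofReal (‖y‖ ^ (t*p)) * ENNReal.ofReal (‖y‖ ^ (-(t*p)))) := by
            ring
        _ = cC * G₀ y ^ p := by
            rw [← ENNReal.ofReal_mul (by positivity), ← Real.rpow_add hy, add_neg_cancel,
              Real.rpow_zero, ENNReal.ofReal_one, mul_one]
    · have h1 := measurable_kr_left d σ y
      fun_prop
  have hmain : (∫⁻ x, (∫⁻ y, ENNReal.ofReal (kr d σ x y) * G₀ y) ^ p)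
      ≤ cB ^ (p/q) * cC * ∫⁻ y, G₀ y ^ p := by
    calc ∫⁻ x, (∫⁻ y, ENNReal.ofReal (kr d σ x y) * G₀ y) ^ p
        ≤ ∫⁻ x, cB ^ (p/q) * (ENNReal.ofReal (‖x‖ ^ (-(t*p))) *
            ∫⁻ y, ENNReal.ofReal (kr d σ x y) * G₀ y ^ p * ENNReal.ofReal (‖y‖ ^ (t*p))) := by
          apply lintegral_mono_ae
          filter_upwards [hae] with x hx0
          exact hHolder x (norm_pos_iff.mpr hx0)
      _ = cB ^ (p/q) * ∫⁻ x, ENNReal.ofReal (‖x‖ ^ (-(t*p))) *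
            ∫⁻ y, ENNReal.ofReal (kr d σ x y) * G₀ y ^ p * ENNReal.ofReal (‖y‖ ^ (t*p)) :=
          lintegral_const_mul' _ _ (ENNReal.rpow_ne_top_of_nonneg (by positivity) hcBtop)
      _ = cB ^ (p/q) * ∫⁻ y, ∫⁻ x, ENNReal.ofReal (‖x‖ ^ (-(t*p))) *
            (ENNReal.ofReal (kr d σ x y) * G₀ y ^ p * ENNReal.ofReal (‖y‖ ^ (t*p))) := by
          rw [← hswap]
          congr 1
          exact lintegral_congr hIeq
      _ ≤ cB ^ (p/q) * ∫⁻ y, cC * G₀ y ^ p := by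
          apply mul_le_mul_right
          apply lintegral_mono_ae
          filter_upwards [hae] with y hy0
          exact hinnerx y (norm_pos_iff.mpr hy0)
      _ = cB ^ (p/q) * cC * ∫⁻ y, G₀ y ^ p := by
          rw [lintegral_const_mul' _ _ hcCtop]
          ring
  -- conclude
  have hsnorm : (∫⁻ y, G₀ y ^ p) ^ (1/p) = eLpNorm g (ENNReal.ofReal p) volume := by
    rw [eLpNorm_eq_lintegral_rpow_enorm_toReal (ENNReal.ofReal_pos.mpr hp0).ne' ENNReal.ofReal_ne_top,
      ENNReal.toReal_ofReal hp0.le]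
    congr 1
    apply lintegral_congr_ae
    filter_upwards [hGG₀] with y hy
    rw [enorm_eq_nnnorm, hy]
  calc (∫⁻ x, (∫⁻ y, ENNReal.ofReal (kr d σ x y) * G₀ y) ^ p) ^ (1/p)
      ≤ (cB ^ (p/q) * cC * ∫⁻ y, G₀ y ^ p) ^ (1/p) := by
        apply ENNReal.rpow_le_rpow hmain (by positivity)
    _ = (cB ^ (p/q) * cC) ^ (1/p) * (∫⁻ y, G₀ y ^ p) ^ (1/p) := by
        rw [ENNReal.mul_rpow_of_nonneg _ _ (by positivity : (0:ℝ) ≤ 1/p)]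
    _ = (cB ^ (p/q) * cC) ^ (1/p) * eLpNorm g (ENNReal.ofReal p) volume := by
        rw [hsnorm]
    _ ≤ ENNReal.ofReal (((cB ^ (p/q) * cC) ^ (1/p)).toReal + 1) *
          eLpNorm g (ENNReal.ofReal p) volume := by
        gcongr
        calc (cB ^ (p/q) * cC) ^ (1/p)
            = ENNReal.ofReal (((cB ^ (p/q) * cC) ^ (1/p)).toReal) :=
              (ENNReal.ofReal_toReal hCfintop).symm
          _ ≤ ENNReal.ofReal (((cB ^ (p/q) * cC) ^ (1/p)).toReal + 1) :=
              by
                apply ENNReal.ofReal_le_ofReal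
                have h0 : (0:ℝ) ≤ ((cB ^ (p/q) * cC) ^ (1/p)).toReal := ENNReal.toReal_nonneg
                linarith
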